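/- Lemma (basic descent estimate for Perturbed GDA). Let f be ℓ-smooth and satisfy the standing assumptions, let r_y > 0, and run Perturbed GDA with step sizes 0 < α ≤ 1/(4(ℓ + r_y)) and 0 < c ≤ r_y/(ℓ(3r_y + 2ℓ)). Define Φ̃(x) := max_{y∈Y} f̃(x,y) for x ∈ X and Ψ_1(x,y) := 2Φ̃(x) − f̃(x,y). Assume (as is known for this setting) that Φ̃ is differentiable on X with ∇Φ̃(x) = ∇_x f(x, ỹ*(x)) and that ∇Φ̃ is (ℓ + ℓ²/r_y)-Lipschitz on X. Then for every t ≥ 0: Ψ_1(x_{t+1}, y_{t+1}) − Ψ_1(x_t, y_t) ≤ 2ℓ·‖ỹ*(x_t) − y_t‖·‖x_{t+1} − x_t‖ − (1/(2α))·‖y_{t+1} − y_t‖² − (1/(2c))·‖x_{t+1} − x_t‖². -/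

import Mathlib

open Set

noncomputable section

/-- Euclidean space `ℝ^m`. -/
abbrev Euc (m : ℕ) : Type := EuclideanSpace ℝ (Fin m)

/-- `P` is the metric projection onto the set `S`, characterized by
`⟨u − P u, s − P u⟩ ≤ 0` for all `s ∈ S`. -/
def IsProjection {m : ℕ} (S : Set (Euc m)) (P : Euc m → Euc m) : Prop :=
  ∀ u, P u ∈ S ∧ ∀ s ∈ S, (inner ℝ (u - P u) (s - P u) : ℝ) ≤ 0

/-- `f` is `l`-smooth, witnessed by the partial gradient maps `gx`, `gy`. -/
def LSmooth {n d : ℕ} (f : Euc n → Euc d → ℝ) (gx : Euc n → Euc d → Euc n)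
    (gy : Euc n → Euc d → Euc d) (l : ℝ) : Prop :=
  (∀ x y, HasGradientAt (fun x' => f x' y) (gx x y) x) ∧
  (∀ x y, HasGradientAt (fun y' => f x y') (gy x y) y) ∧
  (∀ x x' y y', ‖gx x y - gx x' y'‖ ≤ l * (‖x - x'‖ + ‖y - y'‖)) ∧
  (∀ x x' y y', ‖gy x y - gy x' y'‖ ≤ l * (‖x - x'‖ + ‖y - y'‖))

/-- Standing assumptions: `X` closed convex; `Y` nonempty compact convex
containing `0` with diameter `Dy`; `f x` concave on `Y` for every `x ∈ X`. -/
def Standing {n d : ℕ} (f : Euc n → Euc d → ℝ) (X : Set (Euc n)) (Y : Set (Euc d))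
    (Dy : ℝ) : Prop :=
  IsClosed X ∧ Convex ℝ X ∧ Y.Nonempty ∧ IsCompact Y ∧ Convex ℝ Y ∧
    (0 : Euc d) ∈ Y ∧ Metric.diam Y = Dy ∧ ∀ x ∈ X, ConcaveOn ℝ Y (f x)

lemma quad_ub {m : ℕ} {S : Set (Euc m)} (hS : Convex ℝ S) {φ : Euc m → ℝ}
    {g : Euc m → Euc m} {K : ℝ}
    (hg : ∀ z ∈ S, HasGradientAt φ (g z) z)
    (hlip : ∀ z ∈ S, ∀ z' ∈ S, ‖g z - g z'‖ ≤ K * ‖z - z'‖)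
    {a b : Euc m} (ha : a ∈ S) (hb : b ∈ S) :
    φ b ≤ φ a + (inner ℝ (g a) (b - a) : ℝ) + K / 2 * ‖b - a‖ ^ 2 := by
  set Δ := b - a with hΔ
  have hmem : ∀ s ∈ Icc (0:ℝ) 1, a + s • Δ ∈ S := by
    intro s hs
    have := hS ha hb (by linarith [hs.1, hs.2] : (0:ℝ) ≤ 1 - s) hs.1 (by ring)
    convert this using 1
    rw [hΔ]
    module
  set χ : ℝ → ℝ := fun s => φ (a + s • Δ) - s * (inner ℝ (g a) Δ : ℝ) - K * s ^ 2 / 2 * ‖Δ‖ ^ 2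
    with hχ
  have hderiv : ∀ s ∈ Icc (0:ℝ) 1, HasDerivAt χ
      ((inner ℝ (g (a + s • Δ) - g a) Δ : ℝ) - K * s * ‖Δ‖ ^ 2) s := by
    intro s hs
    have h1 : HasDerivAt (fun s : ℝ => a + s • Δ) Δ s := by
      simpa using ((hasDerivAt_id s).smul_const Δ).const_add a
    have h2 : HasDerivAt (fun s : ℝ => φ (a + s • Δ)) ((inner ℝ (g (a + s • Δ)) Δ : ℝ)) s := by
      have := ((hg _ (hmem s hs)).hasFDerivAt.comp_hasDerivAt s h1)
      simp [InnerProductSpace.toDual_apply_apply] at this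
      exact this
    have h3 : HasDerivAt (fun s : ℝ => s * (inner ℝ (g a) Δ : ℝ)) ((inner ℝ (g a) Δ : ℝ)) s := by
      simpa using (hasDerivAt_id s).mul_const ((inner ℝ (g a) Δ : ℝ))
    have h4 : HasDerivAt (fun s : ℝ => K * s ^ 2 / 2 * ‖Δ‖ ^ 2) (K * s * ‖Δ‖ ^ 2) s := by
      have : HasDerivAt (fun s : ℝ => s ^ 2) (2 * s) s := by
        simpa using hasDerivAt_pow 2 s
      have := ((this.const_mul K).div_const 2).mul_const (‖Δ‖ ^ 2)
      exact this.congr_deriv (by ring)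
    have := (h2.sub h3).sub h4
    exact this.congr_deriv (by rw [inner_sub_left])
  have hanti : AntitoneOn χ (Icc 0 1) := by
    apply antitoneOn_of_hasDerivWithinAt_nonpos (convex_Icc 0 1)
      (fun s hs => (hderiv s hs).continuousAt.continuousWithinAt)
      (fun s hs => ((hderiv s (interior_subset hs)).hasDerivWithinAt))
    intro s hs
    rw [interior_Icc] at hs
    have hcs : (inner ℝ (g (a + s • Δ) - g a) Δ : ℝ) ≤ K * s * ‖Δ‖ ^ 2 := by
      calc (inner ℝ (g (a + s • Δ) - g a) Δ : ℝ) ≤ ‖g (a + s • Δ) - g a‖ * ‖Δ‖ :=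
            real_inner_le_norm _ _
        _ ≤ (K * ‖a + s • Δ - a‖) * ‖Δ‖ := by
            have := hlip _ (hmem s ⟨le_of_lt hs.1, le_of_lt hs.2⟩) a ha
            exact mul_le_mul_of_nonneg_right this (norm_nonneg _)
        _ = K * s * ‖Δ‖ ^ 2 := by
            rw [add_sub_cancel_left, norm_smul, Real.norm_eq_abs, abs_of_pos hs.1]
            ring
    linarith
  have := hanti (left_mem_Icc.2 zero_le_one) (right_mem_Icc.2 zero_le_one) zero_le_one
  simp only [hχ, zero_smul, add_zero, one_smul, zero_mul, zero_pow, mul_zero, zero_div,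
    sub_zero, one_pow, mul_one, one_mul] at this
  have hab : a + Δ = b := by rw [hΔ]; abel
  rw [hab] at this
  linarith

lemma hasGradientAt_neg' {m : ℕ} {φ : Euc m → ℝ} {g : Euc m} {x : Euc m}
    (h : HasGradientAt φ g x) : HasGradientAt (fun z => -φ z) (-g) x := by
  rw [hasGradientAt_iff_hasFDerivAt] at h ⊢
  simp only [map_neg]
  exact h.neg

lemma hasGradientAt_sub_sq {d : ℕ} {ψ : Euc d → ℝ} {g y : Euc d}
    (h : HasGradientAt ψ g y) (r : ℝ) :
    HasGradientAt (fun y' => ψ y' - r / 2 * ‖y'‖ ^ 2) (g - r • y) y := by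
  rw [hasGradientAt_iff_hasFDerivAt] at h ⊢
  have h2 : HasFDerivAt (fun y' : Euc d => r / 2 * ‖y'‖ ^ 2)
      ((r / 2) • (2 • (innerSL ℝ y))) y :=
    (hasStrictFDerivAt_norm_sq y).hasFDerivAt.const_mul (r / 2)
  have h3 := h.sub h2
  refine h3.congr_fderiv ?_
  ext v
  simp [inner_sub_left, real_inner_smul_left]
  ring

/-- Basic descent estimate for Perturbed GDA on the potential
`Ψ₁(x,y) = 2 Φ̃(x) − f̃(x,y)`. -/
theorem perturbed_gda_basic_descent
    (n d : ℕ) (f : Euc n → Euc d → ℝ) (gx : Euc n → Euc d → Euc n)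
    (gy : Euc n → Euc d → Euc d) (X : Set (Euc n)) (Y : Set (Euc d))
    (l Dy ry α c : ℝ)
    (projX : Euc n → Euc n) (projY : Euc d → Euc d)
    (xs : ℕ → Euc n) (ys : ℕ → Euc d)
    (ystar : Euc n → Euc d) (Phit : Euc n → ℝ)
    (hl : 0 < l) (hDy : 0 < Dy) (hry : 0 < ry)
    (hsmooth : LSmooth f gx gy l) (hstand : Standing f X Y Dy)
    (hprojX : IsProjection X projX) (hprojY : IsProjection Y projY)
    (hα : 0 < α) (hα' : α ≤ 1 / (4 * (l + ry)))
    (hc : 0 < c) (hc' : c ≤ ry / (l * (3 * ry + 2 * l)))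
    -- Perturbed GDA iterations
    (hx0 : xs 0 ∈ X) (hy0 : ys 0 ∈ Y)
    (hxrec : ∀ t, xs (t + 1) = projX (xs t - c • gx (xs t) (ys t)))
    (hyrec : ∀ t, ys (t + 1) = projY (ys t + α • (gy (xs (t + 1)) (ys t) - ry • ys t)))
    -- ỹ*(x): maximizer of f̃(x,·) over Y
    (hystar : ∀ x ∈ X, ystar x ∈ Y ∧
      ∀ y ∈ Y, f x y - ry / 2 * ‖y‖ ^ 2 ≤ f x (ystar x) - ry / 2 * ‖ystar x‖ ^ 2)
    -- Φ̃(x) = max_{y ∈ Y} f̃(x,y)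
    (hPhit : ∀ x, Phit x = sSup ((fun y => f x y - ry / 2 * ‖y‖ ^ 2) '' Y))
    -- Φ̃ is differentiable on X with ∇Φ̃(x) = ∇ₓ f̃(x, ỹ*(x)) = gx x (ỹ*(x))
    (hgrad : ∀ x ∈ X, HasGradientAt Phit (gx x (ystar x)) x)
    -- ∇Φ̃ is (ℓ + ℓ²/r_y)-Lipschitz on X
    (hlip : ∀ x ∈ X, ∀ x' ∈ X,
      ‖gx x (ystar x) - gx x' (ystar x')‖ ≤ (l + l ^ 2 / ry) * ‖x - x'‖) :
    ∀ t : ℕ,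
      (2 * Phit (xs (t + 1)) - (f (xs (t + 1)) (ys (t + 1)) - ry / 2 * ‖ys (t + 1)‖ ^ 2))
        - (2 * Phit (xs t) - (f (xs t) (ys t) - ry / 2 * ‖ys t‖ ^ 2))
      ≤ 2 * l * ‖ystar (xs t) - ys t‖ * ‖xs (t + 1) - xs t‖
        - 1 / (2 * α) * ‖ys (t + 1) - ys t‖ ^ 2
        - 1 / (2 * c) * ‖xs (t + 1) - xs t‖ ^ 2 := by
  obtain ⟨hgx, hgy, hlipx, hlipy⟩ := hsmooth
  have hXc : Convex ℝ X := hstand.2.1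
  have hmem : ∀ s, xs s ∈ X ∧ ys s ∈ Y := by
    intro s
    induction s with
    | zero => exact ⟨hx0, hy0⟩
    | succ k ih =>
      refine ⟨?_, ?_⟩
      · rw [hxrec k]; exact (hprojX _).1
      · rw [hyrec k]; exact (hprojY _).1
  intro t
  have hX0 := (hmem t).1
  have hX1 := (hmem (t + 1)).1
  have hY0 := (hmem t).2
  -- projection inequality for the x-step
  have hpx : (inner ℝ (gx (xs t) (ys t)) (xs (t + 1) - xs t) : ℝ)
      ≤ -(1 / c) * ‖xs (t + 1) - xs t‖ ^ 2 := by
    have h := (hprojX (xs t - c • gx (xs t) (ys t))).2 (xs t) hX0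
    rw [← hxrec t] at h
    have hrw : (xs t - c • gx (xs t) (ys t)) - xs (t + 1)
        = (xs t - xs (t + 1)) - c • gx (xs t) (ys t) := by module
    rw [hrw, inner_sub_left, real_inner_smul_left, real_inner_self_eq_norm_sq] at h
    have h2 : (inner ℝ (gx (xs t) (ys t)) (xs t - xs (t + 1)) : ℝ)
        = -(inner ℝ (gx (xs t) (ys t)) (xs (t + 1) - xs t) : ℝ) := by
      rw [← inner_neg_right]
      congr 1
      module
    have h3 : ‖xs t - xs (t + 1)‖ = ‖xs (t + 1) - xs t‖ := norm_sub_rev _ _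
    rw [h3, h2] at h
    rw [← mul_le_mul_iff_right₀ hc]
    have h4 : c * (-(1 / c) * ‖xs (t + 1) - xs t‖ ^ 2) = -‖xs (t + 1) - xs t‖ ^ 2 := by
      field_simp
    rw [h4]
    linarith
  -- projection inequality for the y-step
  have hpy : (1 / α) * ‖ys (t + 1) - ys t‖ ^ 2
      ≤ (inner ℝ (gy (xs (t + 1)) (ys t) - ry • ys t) (ys (t + 1) - ys t) : ℝ) := by
    have h := (hprojY (ys t + α • (gy (xs (t + 1)) (ys t) - ry • ys t))).2 (ys t) hY0
    rw [← hyrec t] at h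
    have hrw : (ys t + α • (gy (xs (t + 1)) (ys t) - ry • ys t)) - ys (t + 1)
        = (ys t - ys (t + 1)) + α • (gy (xs (t + 1)) (ys t) - ry • ys t) := by module
    rw [hrw, inner_add_left, real_inner_smul_left, real_inner_self_eq_norm_sq] at h
    have h2 : (inner ℝ (gy (xs (t + 1)) (ys t) - ry • ys t) (ys t - ys (t + 1)) : ℝ)
        = -(inner ℝ (gy (xs (t + 1)) (ys t) - ry • ys t) (ys (t + 1) - ys t) : ℝ) := by
      rw [← inner_neg_right]
      congr 1
      module
    have h3 : ‖ys t - ys (t + 1)‖ = ‖ys (t + 1) - ys t‖ := norm_sub_rev _ _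
    rw [h3, h2] at h
    rw [← mul_le_mul_iff_right₀ hα, ← mul_assoc, mul_one_div, div_self hα.ne', one_mul]
    linarith
  -- quadratic upper bound for Φ̃
  have hA : Phit (xs (t + 1)) ≤ Phit (xs t)
      + (inner ℝ (gx (xs t) (ystar (xs t))) (xs (t + 1) - xs t) : ℝ)
      + (l + l ^ 2 / ry) / 2 * ‖xs (t + 1) - xs t‖ ^ 2 :=
    quad_ub (g := fun x => gx x (ystar x)) hXc hgrad hlip hX0 hX1
  -- quadratic bound for -f(·, y_t)
  have hB : -f (xs (t + 1)) (ys t) ≤ -f (xs t) (ys t)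
      + (inner ℝ (-(gx (xs t) (ys t))) (xs (t + 1) - xs t) : ℝ)
      + l / 2 * ‖xs (t + 1) - xs t‖ ^ 2 := by
    refine quad_ub (S := univ) (φ := fun x => -f x (ys t)) (g := fun x => -(gx x (ys t)))
      convex_univ (fun z _ => hasGradientAt_neg' (hgx z (ys t))) ?_ (mem_univ _) (mem_univ _)
    intro z _ z' _
    have h := hlipx z z' (ys t) (ys t)
    calc ‖-(gx z (ys t)) - -(gx z' (ys t))‖ = ‖gx z (ys t) - gx z' (ys t)‖ := by
          rw [neg_sub_neg, norm_sub_rev]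
      _ ≤ l * (‖z - z'‖ + ‖ys t - ys t‖) := h
      _ = l * ‖z - z'‖ := by rw [sub_self, norm_zero, add_zero]
  -- quadratic bound for -f̃(x_{t+1}, ·)
  have hC : -(f (xs (t + 1)) (ys (t + 1)) - ry / 2 * ‖ys (t + 1)‖ ^ 2)
      ≤ -(f (xs (t + 1)) (ys t) - ry / 2 * ‖ys t‖ ^ 2)
      + (inner ℝ (-(gy (xs (t + 1)) (ys t) - ry • ys t)) (ys (t + 1) - ys t) : ℝ)
      + (l + ry) / 2 * ‖ys (t + 1) - ys t‖ ^ 2 := by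
    refine quad_ub (S := univ)
      (φ := fun y => -(f (xs (t + 1)) y - ry / 2 * ‖y‖ ^ 2))
      (g := fun y => -(gy (xs (t + 1)) y - ry • y))
      convex_univ
      (fun z _ => hasGradientAt_neg' (hasGradientAt_sub_sq (hgy (xs (t + 1)) z) ry))
      ?_ (mem_univ _) (mem_univ _)
    intro z _ z' _
    have e1 : -(gy (xs (t + 1)) z - ry • z) - -(gy (xs (t + 1)) z' - ry • z')
        = (gy (xs (t + 1)) z' - gy (xs (t + 1)) z) - ry • (z' - z) := by module
    rw [e1]
    have h := hlipy (xs (t + 1)) (xs (t + 1)) z' z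
    rw [sub_self, norm_zero, zero_add] at h
    calc ‖(gy (xs (t + 1)) z' - gy (xs (t + 1)) z) - ry • (z' - z)‖
        ≤ ‖gy (xs (t + 1)) z' - gy (xs (t + 1)) z‖ + ‖ry • (z' - z)‖ := norm_sub_le _ _
      _ ≤ l * ‖z' - z‖ + ry * ‖z' - z‖ := by
          rw [norm_smul, Real.norm_eq_abs, abs_of_pos hry]
          linarith
      _ = (l + ry) * ‖z - z'‖ := by rw [norm_sub_rev]; ring
  -- Cauchy–Schwarz bound for the gradient gap
  have hiD : (inner ℝ (gx (xs t) (ystar (xs t)) - gx (xs t) (ys t)) (xs (t + 1) - xs t) : ℝ)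
      ≤ l * ‖ystar (xs t) - ys t‖ * ‖xs (t + 1) - xs t‖ := by
    have h := hlipx (xs t) (xs t) (ystar (xs t)) (ys t)
    rw [sub_self, norm_zero, zero_add] at h
    calc (inner ℝ (gx (xs t) (ystar (xs t)) - gx (xs t) (ys t)) (xs (t + 1) - xs t) : ℝ)
        ≤ ‖gx (xs t) (ystar (xs t)) - gx (xs t) (ys t)‖ * ‖xs (t + 1) - xs t‖ :=
          real_inner_le_norm _ _
      _ ≤ (l * ‖ystar (xs t) - ys t‖) * ‖xs (t + 1) - xs t‖ :=
          mul_le_mul_of_nonneg_right h (norm_nonneg _)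
      _ = l * ‖ystar (xs t) - ys t‖ * ‖xs (t + 1) - xs t‖ := by ring
  -- step-size conditions
  have hKc : l + l ^ 2 / ry + l / 2 ≤ 1 / (2 * c) := by
    rw [le_div_iff₀ (by positivity : (0:ℝ) < 2 * c)]
    have hcc : c * (l * (3 * ry + 2 * l)) ≤ ry :=
      (le_div_iff₀ (by positivity)).mp hc'
    rw [← mul_le_mul_iff_left₀ hry]
    have h5 : (l + l ^ 2 / ry + l / 2) * (2 * c) * ry = c * (l * (3 * ry + 2 * l)) := by
      field_simp
      ring
    rw [h5, one_mul]
    exact hcc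
  have hKα : (l + ry) / 2 ≤ 1 / (2 * α) := by
    rw [div_le_div_iff₀ (by norm_num) (by positivity)]
    have haa : α * (4 * (l + ry)) ≤ 1 := (le_div_iff₀ (by positivity)).mp hα'
    nlinarith [hl, hry, hα]
  -- combine
  rw [inner_neg_left] at hB hC
  have hsplit : (inner ℝ (gx (xs t) (ystar (xs t))) (xs (t + 1) - xs t) : ℝ)
      = (inner ℝ (gx (xs t) (ystar (xs t)) - gx (xs t) (ys t)) (xs (t + 1) - xs t) : ℝ)
      + (inner ℝ (gx (xs t) (ys t)) (xs (t + 1) - xs t) : ℝ) := by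
    rw [inner_sub_left]
    ring
  have hdx2 : (0:ℝ) ≤ ‖xs (t + 1) - xs t‖ ^ 2 := by positivity
  have hdy2 : (0:ℝ) ≤ ‖ys (t + 1) - ys t‖ ^ 2 := by positivity
  have t1 : (l + l ^ 2 / ry + l / 2) * ‖xs (t + 1) - xs t‖ ^ 2
      ≤ 1 / (2 * c) * ‖xs (t + 1) - xs t‖ ^ 2 :=
    mul_le_mul_of_nonneg_right hKc hdx2
  have t2 : (l + ry) / 2 * ‖ys (t + 1) - ys t‖ ^ 2
      ≤ 1 / (2 * α) * ‖ys (t + 1) - ys t‖ ^ 2 :=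
    mul_le_mul_of_nonneg_right hKα hdy2
  have key1 : (1:ℝ) / c = 1 / (2 * c) + 1 / (2 * c) := by
    field_simp
    ring
  have key2 : (1:ℝ) / α = 1 / (2 * α) + 1 / (2 * α) := by
    field_simp
    ring
  have t3 : (1 / c) * ‖xs (t + 1) - xs t‖ ^ 2
      = 1 / (2 * c) * ‖xs (t + 1) - xs t‖ ^ 2 + 1 / (2 * c) * ‖xs (t + 1) - xs t‖ ^ 2 := by
    rw [key1]; ring
  have t4 : (1 / α) * ‖ys (t + 1) - ys t‖ ^ 2
      = 1 / (2 * α) * ‖ys (t + 1) - ys t‖ ^ 2 + 1 / (2 * α) * ‖ys (t + 1) - ys t‖ ^ 2 := by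
    rw [key2]; ring
  linarith [hA, hB, hC, hpx, hpy, hiD, hsplit, t1, t2, t3, t4, hdx2, hdy2]
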